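/- Let R > 0 and let π ≥ β ≥ γ ≥ δ ≥ ε ≥ 0. Set A = (−R, 0), B = P_R(β), C = P_R(γ), D = P_R(δ), E = P_R(ε), F = (R, 0), so that ABCDEF is a hexagon inscribed in the upper semicircle with the side AF as diameter of length 2R. Writing a = dist A B, b = dist B C, c = dist C D, d = dist D E, e = dist E F for the sides, and y = dist A C, z = dist C F, u = dist A D, x = dist D F for the diagonals, one has 4R² = a² + b² + c² + d² + e² + (a·b·z + y·c·x + u·d·e)/R. -/

import Mathlib

noncomputable def P (R θ : ℝ) : EuclideanSpace ℝ (Fin 2) :=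
  (WithLp.equiv 2 (Fin 2 → ℝ)).symm ![R * Real.cos θ, R * Real.sin θ]

lemma distP (R θ1 θ2 : ℝ) (hR : 0 ≤ R) (h1 : θ2 ≤ θ1) (h2 : θ1 - θ2 ≤ 2 * Real.pi) :
    dist (P R θ1) (P R θ2) = 2 * R * Real.sin ((θ1 - θ2) / 2) := by
  have hs : 0 ≤ Real.sin ((θ1 - θ2) / 2) := by
    apply Real.sin_nonneg_of_nonneg_of_le_pi <;> linarith
  have hs' : 0 ≤ 2 * R * Real.sin ((θ1 - θ2) / 2) := by positivity
  have hkey : dist (P R θ1) (P R θ2) ^ 2 = (2 * R * Real.sin ((θ1 - θ2) / 2)) ^ 2 := by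
    rw [EuclideanSpace.dist_eq, Real.sq_sqrt (by positivity)]
    simp [P, Fin.sum_univ_two, Real.dist_eq, sq_abs]
    have s1 := Real.sin_sq_eq_half_sub ((θ1 - θ2) / 2)
    rw [show 2 * ((θ1 - θ2) / 2) = θ1 - θ2 by ring] at s1
    have := Real.cos_sub θ1 θ2
    linear_combination R^2 * Real.sin_sq_add_cos_sq θ1 + R^2 * Real.sin_sq_add_cos_sq θ2 -
      4*R^2*s1 + 2*R^2*this
  calc dist (P R θ1) (P R θ2) = Real.sqrt (dist (P R θ1) (P R θ2) ^ 2) :=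
        (Real.sqrt_sq dist_nonneg).symm
    _ = _ := by rw [hkey, Real.sqrt_sq hs']

lemma key (X Y : ℝ) :
    Real.cos X ^ 2 + Real.sin (X - Y) ^ 2 +
      2 * Real.cos X * Real.sin (X - Y) * Real.sin Y = Real.cos Y ^ 2 := by
  linear_combination (Real.sin (X - Y) + Real.sin X * Real.cos Y - Real.cos X * Real.sin Y +
      2 * Real.cos X * Real.sin Y) * Real.sin_sub X Y +
    Real.cos Y ^ 2 * Real.sin_sq_add_cos_sq X - Real.cos X ^ 2 * Real.sin_sq_add_cos_sq Y

theorem hexagon_pythagoras (R β γ δ ε : ℝ) (hR : 0 < R)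
    (hε : 0 ≤ ε) (hδε : ε ≤ δ) (hγδ : δ ≤ γ) (hβγ : γ ≤ β) (hβ : β ≤ Real.pi)
    (A B C D E F : EuclideanSpace ℝ (Fin 2))
    (hA : A = P R Real.pi) (hB : B = P R β) (hC : C = P R γ)
    (hD : D = P R δ) (hE : E = P R ε) (hF : F = P R 0)
    (a b c d e y z u x : ℝ)
    (ha : a = dist A B) (hb : b = dist B C) (hc : c = dist C D)
    (hd : d = dist D E) (he : e = dist E F)
    (hy : y = dist A C) (hz : z = dist C F) (hu : u = dist A D) (hx : x = dist D F) :
    4 * R ^ 2 =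
      a ^ 2 + b ^ 2 + c ^ 2 + d ^ 2 + e ^ 2 +
        (a * b * z + y * c * x + u * d * e) / R := by
  have pi_pos := Real.pi_pos
  have hR' := hR.le
  subst hA hB hC hD hE hF ha hb hc hd he hy hz hu hx
  rw [distP R Real.pi β hR' (by linarith) (by linarith),
      distP R β γ hR' (by linarith) (by linarith),
      distP R γ δ hR' (by linarith) (by linarith),
      distP R δ ε hR' (by linarith) (by linarith),
      distP R ε 0 hR' (by linarith) (by linarith),
      distP R Real.pi γ hR' (by linarith) (by linarith),
      distP R γ 0 hR' (by linarith) (by linarith),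
      distP R Real.pi δ hR' (by linarith) (by linarith),
      distP R δ 0 hR' (by linarith) (by linarith)]
  field_simp
  rw [show (Real.pi - β) / 2 = Real.pi / 2 - β / 2 by ring,
      show (Real.pi - γ) / 2 = Real.pi / 2 - γ / 2 by ring,
      show (Real.pi - δ) / 2 = Real.pi / 2 - δ / 2 by ring,
      Real.sin_pi_div_two_sub, Real.sin_pi_div_two_sub, Real.sin_pi_div_two_sub,
      show (β - γ) / 2 = β / 2 - γ / 2 by ring,
      show (γ - δ) / 2 = γ / 2 - δ / 2 by ring,
      show (δ - ε) / 2 = δ / 2 - ε / 2 by ring]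
  simp only [sub_zero]
  have k1 := key (β / 2) (γ / 2)
  have k2 := key (γ / 2) (δ / 2)
  have k3 := key (δ / 2) (ε / 2)
  have p := Real.sin_sq_add_cos_sq (ε / 2)
  linear_combination (-4) * (k1 + k2 + k3 + p)
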